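/- Let s : (R₀,∞) → (0,∞) be convex with r < s(r) ≤ r² for all r ≥ R₀. If liminf_{r→∞} s(r)/r = 1, then lim_{r→∞} s(r)/r = 1. -/

import Mathlib

open Set Filter

/-- If `s` is convex on `(R₀,∞)` with `r < s(r) ≤ r²` and
`liminf s(r)/r = 1`, then `s(r)/r → 1`. -/
theorem convex_liminf_one (R₀ : ℝ) (s : ℝ → ℝ)
    (hconv : ConvexOn ℝ (Ioi R₀) s)
    (hbound : ∀ r ≥ R₀, r < s r ∧ s r ≤ r ^ 2)
    (hliminf : Filter.liminf (fun r => s r / r) atTop = 1) :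
    Tendsto (fun r => s r / r) atTop (nhds 1) := by
  obtain ⟨a, haR, ha0⟩ : ∃ a : ℝ, R₀ < a ∧ 0 < a :=
    ⟨max R₀ 0 + 1, lt_of_le_of_lt (le_max_left _ _) (lt_add_one _),
      lt_of_le_of_lt (le_max_right _ _) (lt_add_one _)⟩
  have hsa : a < s a := (hbound a haR.le).1
  -- monotonicity of secant slopes
  have hsec : ∀ x y : ℝ, a < x → x ≤ y →
      (s x - s a) / (x - a) ≤ (s y - s a) / (y - a) := by
    intro x y hx hxy
    exact hconv.secant_mono (mem_Ioi.2 haR) (mem_Ioi.2 (haR.trans hx))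
      (mem_Ioi.2 (haR.trans (hx.trans_le hxy))) (ne_of_gt hx)
      (ne_of_gt (hx.trans_le hxy)) hxy
  -- the modified slope function
  set g : ℝ → ℝ := fun r => (s (max r (a + 1)) - s a) / (max r (a + 1) - a) with hg_def
  have hlt : ∀ r : ℝ, a < max r (a + 1) :=
    fun r => lt_of_lt_of_le (lt_add_one a) (le_max_right _ _)
  have hgmono : Monotone g := by
    intro x y hxy
    exact hsec _ _ (hlt x) (max_le_max hxy le_rfl)
  -- s r / r > 1 eventually, so bounded below
  have hlow : ∀ᶠ r in atTop, (1 : ℝ) ≤ s r / r := by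
    filter_upwards [eventually_ge_atTop (max R₀ 1)] with r hr
    have hr1 : (1 : ℝ) ≤ r := le_trans (le_max_right _ _) hr
    have := (hbound r (le_trans (le_max_left _ _) hr)).1
    rw [le_div_iff₀ (by linarith)]
    linarith
  have hbddbelow : IsBoundedUnder (· ≥ ·) atTop (fun r => s r / r) :=
    isBoundedUnder_of_eventually_ge hlow
  -- frequently s r / r < 2
  have hfreq : ∃ᶠ r in atTop, s r / r < 2 := by
    by_contra h
    rw [Filter.not_frequently] at h
    have h2 : ∀ᶠ r in atTop, (2 : ℝ) ≤ s r / r := by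
      filter_upwards [h] with r hr; linarith [not_lt.1 hr]
    rw [Filter.liminf_eq] at hliminf
    set A : Set ℝ := {a | ∀ᶠ x in atTop, a ≤ s x / x} with hA
    have h2A : (2 : ℝ) ∈ A := h2
    by_cases hb : BddAbove A
    · have := le_csSup hb h2A
      rw [hliminf] at this; linarith
    · have := Real.sSup_of_not_bddAbove hb
      rw [hliminf] at this; linarith
  -- g is bounded above by 4
  have hgbdd : ∀ r : ℝ, g r ≤ 4 := by
    intro r
    obtain ⟨t, ht, hst⟩ := (hfreq.and_eventually
      (eventually_ge_atTop (max (max r (a + 1)) (max (2 * a) (2 * s a))))).exists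
    have ht1 : max r (a + 1) ≤ t := le_trans (le_max_left _ _) hst
    have ht2 : 2 * a ≤ t := le_trans (le_max_left _ _) (le_trans (le_max_right _ _) hst)
    have ht3 : 2 * s a ≤ t := le_trans (le_max_right _ _) (le_trans (le_max_right _ _) hst)
    have ht0 : 0 < t := by linarith
    have hstt : s t < 2 * t := by
      have := (div_lt_iff₀ ht0).1 ht; linarith
    have h1 : g r ≤ (s t - s a) / (t - a) := hsec _ _ (hlt r) ht1
    have h2 : (s t - s a) / (t - a) ≤ (2 * t) / (t / 2) := by
      apply div_le_div₀ (by positivity) (by linarith) (by linarith) (by linarith)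
    have h3 : (2 * t) / (t / 2) = 4 := by
      field_simp; ring
    linarith [h1, h2.trans_eq h3]
  have hbddab : BddAbove (range g) := ⟨4, fun x ⟨r, hr⟩ => hr ▸ hgbdd r⟩
  -- g tends to L
  set L : ℝ := ⨆ r, g r with hL_def
  have hgL : Tendsto g atTop (nhds L) := tendsto_atTop_ciSup hgmono hbddab
  -- s r / r tends to L
  have hmain : Tendsto (fun r => s r / r) atTop (nhds L) := by
    have h1 : Tendsto (fun r : ℝ => g r * ((r - a) / r) + s a / r) atTop (nhds (L * 1 + 0)) := by
      apply Tendsto.add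
      · apply hgL.mul
        have h2 : Tendsto (fun r : ℝ => 1 - a / r) atTop (nhds 1) := by
          simpa using (tendsto_const_nhds (x := (1:ℝ))).sub
            (tendsto_const_nhds.div_atTop tendsto_id)
        apply h2.congr'
        filter_upwards [eventually_gt_atTop 0] with r hr
        field_simp
      · exact tendsto_const_nhds.div_atTop tendsto_id
    rw [mul_one, add_zero] at h1
    apply h1.congr'
    filter_upwards [eventually_ge_atTop (a + 1)] with r hr
    have hra : a < r := by linarith
    have hr0 : 0 < r := ha0.trans hra
    have hmax : max r (a + 1) = r := max_eq_left hr
    rw [hg_def]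
    simp only [hmax]
    have h1 : r - a ≠ 0 := sub_ne_zero_of_ne (ne_of_gt hra)
    have h2 : r ≠ 0 := ne_of_gt hr0
    field_simp
    ring
  have : L = 1 := by rw [← hliminf, hmain.liminf_eq]
  rwa [this] at hmain
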